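/- arXiv:2412.10703 — 2 statements merged into one kernel-verified Lean document; each statement's English description precedes it below -/
import Mathlib

section
/- Consider horizon T ≥ 1 and the COLDQ setup: 𝒳 ⊆ ℝ^p convex with ‖x − y‖ ≤ R for all x, y ∈ 𝒳 (R > 0); convex losses f_t with subgradient maps ∇f_t satisfying ‖∇f_t(x)‖ ≤ D and f_t(y) ≥ f_t(x) + ⟨∇f_t(x), y − x⟩ on 𝒳; convex constraints g_t^n with |g_t^n(x)| ≤ G on 𝒳; parameters η ∈ (0,1), γ ∈ (0, G/η); step sizes α_t = t^{(1−V_x)/2} for some fixed V_x ∈ [0,1]; x_1 ∈ 𝒳 arbitrary, Q_1^n = γ, and for t ∈ {2,…,T}: x_t minimizes Φ_t(x) = ⟨∇f_{t−1}(x_{t−1}), x − x_{t−1}⟩ + α_{t−1}·‖x − x_{t−1}‖² + Σ_{n=1}^N Q_{t−1}^n·[g_{t−1}^n(x)]_+ over 𝒳 and Q_t^n = max{(1−η)·Q_{t−1}^n + [g_t^n(x_t)]_+ , γ}. Suppose the benchmark path length satisfies Σ_{t=2}^T ‖x_t* − x_{t−1}*‖ ≤ C_x·T^{V_x} for a constant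 C_x ≥ 0, where each x_t* ∈ 𝒳 satisfies g_t^n(x_t*) ≤ 0 for all n. Then the dynamic regret satisfies Σ_{t=1}^T [f_t(x_t) − f_t(x_t*)] ≤ (2·R·C_x + D²/(2·(1+V_x)) + R² + D·R)·T^{(1+V_x)/2}. -/
open scoped RealInnerProductSpace

lemma norm_combo_sq {E : Type*} [NormedAddCommGroup E] [InnerProductSpace ℝ E]
    (a b : E) (l : ℝ) :
    ‖(1 - l) • a + l • b‖ ^ 2
      = (1 - l) * ‖a‖ ^ 2 + l * ‖b‖ ^ 2 - l * (1 - l) * ‖a - b‖ ^ 2 := by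
  have h1 := norm_add_sq_real ((1 - l) • a) (l • b)
  have h2 := norm_sub_sq_real a b
  have h3 : ‖(1 - l) • a‖ ^ 2 = (1 - l) ^ 2 * ‖a‖ ^ 2 := by
    rw [norm_smul]; simp [mul_pow, sq_abs]
  have h4 : ‖l • b‖ ^ 2 = l ^ 2 * ‖b‖ ^ 2 := by
    rw [norm_smul]; simp [mul_pow, sq_abs]
  have h5 : ⟪(1 - l) • a, l • b⟫ = (1 - l) * (l * ⟪a, b⟫) := by
    rw [real_inner_smul_left, real_inner_smul_right]
  rw [h1, h3, h4, h5, h2]; ring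

lemma strong_min_aux {E : Type*} [NormedAddCommGroup E] [InnerProductSpace ℝ E]
    {s : Set E} (hs : Convex ℝ s) (v c : E) (a : ℝ) (ha : 0 ≤ a)
    (S : E → ℝ) (hS : ConvexOn ℝ s S)
    {z y : E} (hz : z ∈ s) (hy : y ∈ s)
    (hmin : ∀ w ∈ s, ⟪v, z - c⟫ + a * ‖z - c‖ ^ 2 + S z
      ≤ ⟪v, w - c⟫ + a * ‖w - c‖ ^ 2 + S w) :
    ⟪v, z - c⟫ + a * ‖z - c‖ ^ 2 + S z + a * ‖z - y‖ ^ 2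
      ≤ ⟪v, y - c⟫ + a * ‖y - c‖ ^ 2 + S y := by
  have key : ∀ l : ℝ, 0 < l → l ≤ 1 →
      ⟪v, z - c⟫ + a * ‖z - c‖ ^ 2 + S z + a * (1 - l) * ‖z - y‖ ^ 2
        ≤ ⟪v, y - c⟫ + a * ‖y - c‖ ^ 2 + S y := by
    intro l hl0 hl1
    have hm : (1 - l) • z + l • y ∈ s := hs hz hy (by linarith) hl0.le (by ring)
    have h1 := hmin _ hm
    have hmc : (1 - l) • z + l • y - c = (1 - l) • (z - c) + l • (y - c) := by
      module
    have h2 : ⟪v, (1 - l) • z + l • y - c⟫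
        = (1 - l) * ⟪v, z - c⟫ + l * ⟪v, y - c⟫ := by
      rw [hmc, inner_add_right, real_inner_smul_right, real_inner_smul_right]
    have h3 : ‖(1 - l) • z + l • y - c‖ ^ 2
        = (1 - l) * ‖z - c‖ ^ 2 + l * ‖y - c‖ ^ 2 - l * (1 - l) * ‖z - y‖ ^ 2 := by
      rw [hmc, norm_combo_sq]
      congr 3
      rw [show z - c - (y - c) = z - y from by abel]
    have h4 : S ((1 - l) • z + l • y) ≤ (1 - l) * S z + l * S y :=
      hS.2 hz hy (by linarith) hl0.le (by ring)
    have h6 : ⟪v, z - c⟫ + a * ‖z - c‖ ^ 2 + S z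
        ≤ (1 - l) * ⟪v, z - c⟫ + l * ⟪v, y - c⟫
          + a * ((1 - l) * ‖z - c‖ ^ 2 + l * ‖y - c‖ ^ 2 - l * (1 - l) * ‖z - y‖ ^ 2)
          + ((1 - l) * S z + l * S y) := by
      calc ⟪v, z - c⟫ + a * ‖z - c‖ ^ 2 + S z
          ≤ ⟪v, (1 - l) • z + l • y - c⟫ + a * ‖(1 - l) • z + l • y - c‖ ^ 2
            + S ((1 - l) • z + l • y) := h1
        _ ≤ _ := by rw [h2, h3]; linarith
    have h7 : l * (⟪v, z - c⟫ + a * ‖z - c‖ ^ 2 + S z + a * (1 - l) * ‖z - y‖ ^ 2)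
        ≤ l * (⟪v, y - c⟫ + a * ‖y - c‖ ^ 2 + S y) := by nlinarith [h6]
    exact le_of_mul_le_mul_left h7 hl0
  have hC : 0 ≤ a * ‖z - y‖ ^ 2 := by positivity
  apply le_of_forall_pos_le_add
  intro ε hε
  set K := a * ‖z - y‖ ^ 2 with hK
  set l := min 1 (ε / (K + 1)) with hl
  have hK1 : 0 < K + 1 := by linarith
  have hl0 : 0 < l := lt_min one_pos (div_pos hε hK1)
  have hl1 : l ≤ 1 := min_le_left _ _
  have h := key l hl0 hl1
  have hle : l * (K + 1) ≤ ε := by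
    have hm : l ≤ ε / (K + 1) := min_le_right _ _
    calc l * (K + 1) ≤ (ε / (K + 1)) * (K + 1) := by nlinarith
      _ = ε := by field_simp
  have heq : a * (1 - l) * ‖z - y‖ ^ 2 = K - l * K := by rw [hK]; ring
  nlinarith [h, hle, hl0]

set_option maxHeartbeats 1000000 in
/-- Corollary 1 (regret part): COLDQ with `α_t = t^((1−V_x)/2)` achieves
`O(T^((1+V_x)/2))` dynamic regret, with explicit constant. -/
theorem coldq_dynamic_regret_explicit
    (p N T : ℕ) (hT : 1 ≤ T) (R D G η γ Vx Cx : ℝ)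
    (hR : 0 < R) (hVx0 : 0 ≤ Vx) (hVx1 : Vx ≤ 1) (hCx : 0 ≤ Cx)
    (𝒳 : Set (EuclideanSpace ℝ (Fin p)))
    (hXconv : Convex ℝ 𝒳)
    (hXbdd : ∀ x ∈ 𝒳, ∀ y ∈ 𝒳, ‖x - y‖ ≤ R)
    (f : ℕ → EuclideanSpace ℝ (Fin p) → ℝ)
    (hfconv : ∀ t, ConvexOn ℝ 𝒳 (f t))
    (gradf : ℕ → EuclideanSpace ℝ (Fin p) → EuclideanSpace ℝ (Fin p))
    (hgradD : ∀ t, ∀ x ∈ 𝒳, ‖gradf t x‖ ≤ D)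
    (hsub : ∀ t, ∀ x ∈ 𝒳, ∀ y ∈ 𝒳, f t x + ⟪gradf t x, y - x⟫ ≤ f t y)
    (g : ℕ → Fin N → EuclideanSpace ℝ (Fin p) → ℝ)
    (hgconv : ∀ t n, ConvexOn ℝ 𝒳 (g t n))
    (hgG : ∀ t n, ∀ x ∈ 𝒳, |g t n x| ≤ G)
    (α : ℕ → ℝ) (hα : ∀ t, α t = (t : ℝ) ^ ((1 - Vx) / 2))
    (hη0 : 0 < η) (hη1 : η < 1) (hγ0 : 0 < γ) (hγG : γ < G / η)
    (x : ℕ → EuclideanSpace ℝ (Fin p)) (hx1 : x 1 ∈ 𝒳)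
    (Q : ℕ → Fin N → ℝ) (hQ1 : ∀ n, Q 1 n = γ)
    (hxX : ∀ t, 2 ≤ t → t ≤ T → x t ∈ 𝒳)
    (hxmin : ∀ t, 2 ≤ t → t ≤ T → ∀ y ∈ 𝒳,
      ⟪gradf (t - 1) (x (t - 1)), x t - x (t - 1)⟫
          + α (t - 1) * ‖x t - x (t - 1)‖ ^ 2
          + ∑ n, Q (t - 1) n * max (g (t - 1) n (x t)) 0 ≤
        ⟪gradf (t - 1) (x (t - 1)), y - x (t - 1)⟫
          + α (t - 1) * ‖y - x (t - 1)‖ ^ 2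
          + ∑ n, Q (t - 1) n * max (g (t - 1) n y) 0)
    (hQupd : ∀ t, 2 ≤ t → t ≤ T → ∀ n,
      Q t n = max ((1 - η) * Q (t - 1) n + max (g t n (x t)) 0) γ)
    (xstar : ℕ → EuclideanSpace ℝ (Fin p))
    (hxstarX : ∀ t, 1 ≤ t → t ≤ T → xstar t ∈ 𝒳)
    (hxstarfeas : ∀ t, 1 ≤ t → t ≤ T → ∀ n, g t n (xstar t) ≤ 0)
    (hpath : ∑ t ∈ Finset.Icc 2 T, ‖xstar t - xstar (t - 1)‖ ≤ Cx * (T : ℝ) ^ Vx) :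
    ∑ t ∈ Finset.Icc 1 T, (f t (x t) - f t (xstar t)) ≤
      (2 * R * Cx + D ^ 2 / (2 * (1 + Vx)) + R ^ 2 + D * R)
        * (T : ℝ) ^ ((1 + Vx) / 2) := by
  set q : ℝ := (1 + Vx) / 2 with hqdef
  set β : ℝ := (1 - Vx) / 2 with hβdef
  have hq0 : 0 < q := by rw [hqdef]; linarith
  have hq1 : q ≤ 1 := by rw [hqdef]; linarith
  have hβ0 : 0 ≤ β := by rw [hβdef]; linarith
  have hβq : β ≤ q := by rw [hβdef, hqdef]; linarith
  have hT1 : (1:ℝ) ≤ (T:ℝ) := by exact_mod_cast hT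
  have hTpos : (0:ℝ) < (T:ℝ) := by linarith
  have hTq1 : (1:ℝ) ≤ (T:ℝ) ^ q := by
    calc (1:ℝ) = (T:ℝ) ^ (0:ℝ) := (Real.rpow_zero _).symm
      _ ≤ _ := Real.rpow_le_rpow_of_exponent_le hT1 hq0.le
  have hTβq : (T:ℝ) ^ β ≤ (T:ℝ) ^ q := Real.rpow_le_rpow_of_exponent_le hT1 hβq
  have hD0 : 0 ≤ D := le_trans (norm_nonneg _) (hgradD 0 (x 1) hx1)
  have hQγ : ∀ s, 1 ≤ s → s ≤ T → ∀ n, γ ≤ Q s n := by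
    intro s hs1 hsT n
    rcases eq_or_lt_of_le hs1 with rfl | h
    · rw [hQ1]
    · rw [hQupd s h hsT n]; exact le_max_right _ _
  have hxmem : ∀ s, 1 ≤ s → s ≤ T → x s ∈ 𝒳 := by
    intro s hs1 hsT
    rcases eq_or_lt_of_le hs1 with rfl | h
    · exact hx1
    · exact hxX s h hsT
  have hαpos : ∀ s : ℕ, 1 ≤ s → 0 < α s := by
    intro s hs; rw [hα]
    exact Real.rpow_pos_of_pos (by exact_mod_cast Nat.lt_of_lt_of_le Nat.zero_lt_one hs) _
  have hαmono : ∀ s u : ℕ, s ≤ u → α s ≤ α u := by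
    intro s u hsu; rw [hα, hα]
    exact Real.rpow_le_rpow (Nat.cast_nonneg _) (by exact_mod_cast hsu) hβ0
  have hαT : ∀ s : ℕ, s ≤ T → α s ≤ (T:ℝ) ^ β := by
    intro s hs; rw [hα]
    exact Real.rpow_le_rpow (Nat.cast_nonneg _) (by exact_mod_cast hs) hβ0
  -- key per-step inequality
  have hkey : ∀ s : ℕ, 1 ≤ s → s + 1 ≤ T →
      f s (x s) - f s (xstar s) ≤
        D ^ 2 / (4 * α s)
          + α s * (‖x s - xstar s‖ ^ 2 - ‖x (s+1) - xstar (s+1)‖ ^ 2)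
          + 2 * R * (α s * ‖xstar (s+1) - xstar s‖) := by
    intro s hs1 hsT
    have ht2 : 2 ≤ s + 1 := by omega
    have hxt : x (s+1) ∈ 𝒳 := hxX _ ht2 hsT
    have hxs : x s ∈ 𝒳 := hxmem s hs1 (by omega)
    have hys : xstar s ∈ 𝒳 := hxstarX s hs1 (by omega)
    have hyt : xstar (s+1) ∈ 𝒳 := hxstarX _ (by omega) hsT
    have hap : 0 < α s := hαpos s hs1
    have hQn : ∀ n, (0:ℝ) ≤ Q s n := fun n => le_trans hγ0.le (hQγ s hs1 (by omega) n)
    have hSconv : ConvexOn ℝ 𝒳 (fun z => ∑ n, Q s n * max (g s n z) 0) := by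
      refine ⟨hXconv, fun u hu w hw μ ν hμ hν hμν => ?_⟩
      simp only [smul_eq_mul]
      rw [Finset.mul_sum, Finset.mul_sum, ← Finset.sum_add_distrib]
      refine Finset.sum_le_sum fun n _ => ?_
      have hmax := ((hgconv s n).sup (convexOn_const (0:ℝ) hXconv)).2 hu hw hμ hν hμν
      simp only [Pi.sup_apply, smul_eq_mul] at hmax
      calc Q s n * max (g s n (μ • u + ν • w)) 0
          ≤ Q s n * (μ * max (g s n u) 0 + ν * max (g s n w) 0) :=
            mul_le_mul_of_nonneg_left hmax (hQn n)
        _ = μ * (Q s n * max (g s n u) 0) + ν * (Q s n * max (g s n w) 0) := by ring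
    have hstrong := strong_min_aux hXconv (gradf s (x s)) (x s) (α s) hap.le
      (fun z => ∑ n, Q s n * max (g s n z) 0) hSconv hxt hys
      (fun w hw => by simpa using hxmin (s+1) ht2 hsT w hw)
    beta_reduce at hstrong
    have hSy : (∑ n, Q s n * max (g s n (xstar s)) 0) = 0 :=
      Finset.sum_eq_zero fun n _ => by
        rw [max_eq_right (hxstarfeas s hs1 (by omega) n), mul_zero]
    have hSx : 0 ≤ ∑ n, Q s n * max (g s n (x (s+1))) 0 :=
      Finset.sum_nonneg fun n _ => mul_nonneg (hQn n) (le_max_right _ _)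
    have hsubg := hsub s (x s) hxs (xstar s) hys
    have hCS : -⟪gradf s (x s), x (s+1) - x s⟫ ≤ D * ‖x (s+1) - x s‖ := by
      calc -⟪gradf s (x s), x (s+1) - x s⟫ = ⟪gradf s (x s), x s - x (s+1)⟫ := by
            rw [← inner_neg_right]; congr 1; abel
        _ ≤ ‖gradf s (x s)‖ * ‖x s - x (s+1)‖ := real_inner_le_norm _ _
        _ ≤ D * ‖x (s+1) - x s‖ := by
            rw [norm_sub_rev]
            exact mul_le_mul_of_nonneg_right (hgradD s (x s) hxs) (norm_nonneg _)
    have hquad : D * ‖x (s+1) - x s‖ - α s * ‖x (s+1) - x s‖ ^ 2 ≤ D ^ 2 / (4 * α s) := by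
      rw [le_div_iff₀ (by positivity)]
      nlinarith [sq_nonneg (D - 2 * α s * ‖x (s+1) - x s‖)]
    have hshift : ‖x (s+1) - xstar (s+1)‖ ^ 2 - ‖x (s+1) - xstar s‖ ^ 2
        ≤ 2 * R * ‖xstar (s+1) - xstar s‖ := by
      have h1 : ‖x (s+1) - xstar (s+1)‖ ≤ R := hXbdd _ hxt _ hyt
      have h2 : ‖x (s+1) - xstar s‖ ≤ R := hXbdd _ hxt _ hys
      have h3 : ‖x (s+1) - xstar (s+1)‖ - ‖x (s+1) - xstar s‖
          ≤ ‖xstar (s+1) - xstar s‖ := by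
        have h := norm_sub_norm_le (x (s+1) - xstar (s+1)) (x (s+1) - xstar s)
        rw [show (x (s+1) - xstar (s+1)) - (x (s+1) - xstar s) = xstar s - xstar (s+1)
          from by abel, norm_sub_rev (xstar s) (xstar (s+1))] at h
        exact h
      set u := ‖x (s+1) - xstar (s+1)‖ with hu
      set w := ‖x (s+1) - xstar s‖ with hw
      set d := ‖xstar (s+1) - xstar s‖ with hd
      have hd0 : 0 ≤ d := norm_nonneg _
      have hw0 : 0 ≤ w := norm_nonneg _
      have hu0 : 0 ≤ u := norm_nonneg _
      have h4 : (u - w) * (u + w) ≤ d * (u + w) :=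
        mul_le_mul_of_nonneg_right h3 (by linarith)
      have h5 : d * (u + w) ≤ d * (2 * R) :=
        mul_le_mul_of_nonneg_left (by linarith) hd0
      nlinarith [h4, h5]
    have hshift' := mul_le_mul_of_nonneg_left hshift hap.le
    have hAe2 : ‖xstar s - x s‖ ^ 2 = ‖x s - xstar s‖ ^ 2 := by rw [norm_sub_rev]
    rw [hAe2, hSy] at hstrong
    linarith [hstrong, hsubg, hCS, hquad, hshift', hSx]
  -- split off the last term
  have hTsub : T - 1 + 1 = T := by omega
  have hsplit : ∑ t ∈ Finset.Icc 1 T, (f t (x t) - f t (xstar t))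
      = (∑ s ∈ Finset.Icc 1 (T-1), (f s (x s) - f s (xstar s)))
        + (f T (x T) - f T (xstar T)) := by
    conv_lhs => rw [← hTsub]
    rw [Finset.sum_Icc_succ_top (by omega), hTsub]
  -- reindexed path bound
  have hpath' : ∑ s ∈ Finset.Icc 1 (T-1), ‖xstar (s+1) - xstar s‖ ≤ Cx * (T:ℝ) ^ Vx := by
    have hmap : Finset.Icc 2 T = (Finset.Icc 1 (T-1)).map (addRightEmbedding 1) := by
      rw [Finset.map_add_right_Icc]; congr 1 <;> omega
    rw [hmap, Finset.sum_map] at hpath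
    simpa using hpath
  -- per-term bound summed
  have hbound1 : ∑ s ∈ Finset.Icc 1 (T-1), (f s (x s) - f s (xstar s))
      ≤ ∑ s ∈ Finset.Icc 1 (T-1), (D ^ 2 / (4 * α s)
          + α s * (‖x s - xstar s‖ ^ 2 - ‖x (s+1) - xstar (s+1)‖ ^ 2)
          + 2 * R * (α s * ‖xstar (s+1) - xstar s‖)) := by
    refine Finset.sum_le_sum fun s hs => ?_
    rw [Finset.mem_Icc] at hs
    exact hkey s hs.1 (by omega)
  have hsum3 : ∑ s ∈ Finset.Icc 1 (T-1), (D ^ 2 / (4 * α s)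
          + α s * (‖x s - xstar s‖ ^ 2 - ‖x (s+1) - xstar (s+1)‖ ^ 2)
          + 2 * R * (α s * ‖xstar (s+1) - xstar s‖))
      = (∑ s ∈ Finset.Icc 1 (T-1), D ^ 2 / (4 * α s))
        + (∑ s ∈ Finset.Icc 1 (T-1),
            α s * (‖x s - xstar s‖ ^ 2 - ‖x (s+1) - xstar (s+1)‖ ^ 2))
        + (∑ s ∈ Finset.Icc 1 (T-1), 2 * R * (α s * ‖xstar (s+1) - xstar s‖)) := by
    rw [Finset.sum_add_distrib, Finset.sum_add_distrib]
  -- C1 : step-size sum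
  have hC1 : ∑ s ∈ Finset.Icc 1 (T-1), D ^ 2 / (4 * α s)
      ≤ D ^ 2 / (2 * (1 + Vx)) * (T:ℝ) ^ q := by
    have hb : ∀ s : ℕ, 1 ≤ s → (s:ℝ) ^ (q - 1) ≤ ((s:ℝ) ^ q - ((s:ℝ) - 1) ^ q) / q := by
      intro s hs
      have hs1 : (1:ℝ) ≤ (s:ℝ) := by exact_mod_cast hs
      have hsp : (0:ℝ) < (s:ℝ) := by linarith
      have hinv : 1 / (s:ℝ) ≤ 1 := by
        rw [div_le_one hsp]; exact hs1
      have hbern : (1 + (-1 / (s:ℝ))) ^ q ≤ 1 + q * (-1 / (s:ℝ)) :=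
        rpow_one_add_le_one_add_mul_self (by rw [neg_div]; linarith) hq0.le hq1
      have hfac : ((s:ℝ) - 1) ^ q = (s:ℝ) ^ q * (1 + (-1 / (s:ℝ))) ^ q := by
        rw [← Real.mul_rpow hsp.le (by rw [neg_div]; linarith [div_nonneg (le_of_lt one_pos) hsp.le])]
        congr 1
        field_simp
        ring
      have hsq : (s:ℝ) ^ (q - 1) = (s:ℝ) ^ q / (s:ℝ) := by
        rw [Real.rpow_sub hsp, Real.rpow_one]
      have hsqpos : 0 < (s:ℝ) ^ q := Real.rpow_pos_of_pos hsp _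
      rw [hsq, le_div_iff₀ hq0, hfac]
      have hmul := mul_le_mul_of_nonneg_left hbern hsqpos.le
      have he : (s:ℝ) ^ q * (1 + q * (-1 / (s:ℝ)))
          = (s:ℝ) ^ q - q * ((s:ℝ) ^ q / (s:ℝ)) := by
        field_simp; ring
      rw [he] at hmul
      linarith
    have htel : ∑ s ∈ Finset.Icc 1 (T-1), (((s:ℝ) ^ q - ((s:ℝ) - 1) ^ q))
        = ((T-1 : ℕ):ℝ) ^ q := by
      have hmap2 : Finset.Icc 1 (T-1) = (Finset.range (T-1)).map (addRightEmbedding 1) := by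
        rw [Finset.range_eq_Ico, Finset.map_add_right_Ico, Finset.Ico_add_one_right_eq_Icc]
      rw [hmap2, Finset.sum_map]
      have hcg : ∀ i ∈ Finset.range (T - 1),
          (((addRightEmbedding 1 i :ℕ):ℝ) ^ q - (((addRightEmbedding 1 i :ℕ):ℝ) - 1) ^ q)
            = (fun n : ℕ => ((n:ℕ):ℝ) ^ q) (i + 1) - (fun n : ℕ => ((n:ℕ):ℝ) ^ q) i := by
        intro i _
        simp only [addRightEmbedding_apply]
        push_cast
        rw [show (i:ℝ) + 1 - 1 = (i:ℝ) from by ring]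
      rw [Finset.sum_congr rfl hcg, Finset.sum_range_sub (fun n : ℕ => ((n:ℕ):ℝ) ^ q)]
      simp [Real.zero_rpow hq0.ne']
    have hsum : ∑ s ∈ Finset.Icc 1 (T-1), (s:ℝ) ^ (q - 1) ≤ (T:ℝ) ^ q / q := by
      have hc1 : ((T-1:ℕ):ℝ) ^ q ≤ (T:ℝ) ^ q :=
        Real.rpow_le_rpow (Nat.cast_nonneg _) (by exact_mod_cast Nat.sub_le T 1) hq0.le
      calc ∑ s ∈ Finset.Icc 1 (T-1), (s:ℝ) ^ (q - 1)
          ≤ ∑ s ∈ Finset.Icc 1 (T-1), ((s:ℝ) ^ q - ((s:ℝ) - 1) ^ q) / q := by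
            refine Finset.sum_le_sum fun s hs => ?_
            rw [Finset.mem_Icc] at hs
            exact hb s hs.1
        _ = (∑ s ∈ Finset.Icc 1 (T-1), ((s:ℝ) ^ q - ((s:ℝ) - 1) ^ q)) / q :=
            (Finset.sum_div _ _ _).symm
        _ = ((T-1 : ℕ):ℝ) ^ q / q := by rw [htel]
        _ ≤ (T:ℝ) ^ q / q := by gcongr
    have hre : ∑ s ∈ Finset.Icc 1 (T-1), D ^ 2 / (4 * α s)
        = D ^ 2 / 4 * ∑ s ∈ Finset.Icc 1 (T-1), (s:ℝ) ^ (q - 1) := by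
      rw [Finset.mul_sum]
      refine Finset.sum_congr rfl fun s hs => ?_
      rw [Finset.mem_Icc] at hs
      have hsp : (0:ℝ) < (s:ℝ) := by exact_mod_cast Nat.lt_of_lt_of_le Nat.zero_lt_one hs.1
      rw [hα, show q - 1 = -β from by rw [hqdef, hβdef]; ring, Real.rpow_neg hsp.le]
      have hne : ((s:ℝ) ^ β) ≠ 0 := (Real.rpow_pos_of_pos hsp β).ne'
      field_simp
    have hVxpos : (0:ℝ) < 1 + Vx := by linarith
    calc ∑ s ∈ Finset.Icc 1 (T-1), D ^ 2 / (4 * α s)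
        = D ^ 2 / 4 * ∑ s ∈ Finset.Icc 1 (T-1), (s:ℝ) ^ (q - 1) := hre
      _ ≤ D ^ 2 / 4 * ((T:ℝ) ^ q / q) := mul_le_mul_of_nonneg_left hsum (by positivity)
      _ = D ^ 2 / (2 * (1 + Vx)) * (T:ℝ) ^ q := by
          rw [hqdef]; field_simp; ring
  -- C2 : telescoping sum
  have hC2 : ∑ s ∈ Finset.Icc 1 (T-1),
        α s * (‖x s - xstar s‖ ^ 2 - ‖x (s+1) - xstar (s+1)‖ ^ 2)
      ≤ (T:ℝ) ^ q * R ^ 2 := by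
    rcases Nat.lt_or_ge T 2 with hT2 | hT2
    · have h0 : T - 1 = 0 := by omega
      rw [h0, show Finset.Icc 1 0 = ∅ from Finset.Icc_eq_empty (by omega), Finset.sum_empty]
      positivity
    · have hclaim : ∀ m, 1 ≤ m → m ≤ T - 1 →
          ∑ s ∈ Finset.Icc 1 m, α s * (‖x s - xstar s‖ ^ 2 - ‖x (s+1) - xstar (s+1)‖ ^ 2)
            ≤ α m * (R ^ 2 - ‖x (m+1) - xstar (m+1)‖ ^ 2) := by
        intro m hm1
        induction m, hm1 using Nat.le_induction with
        | base =>
          intro _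
          rw [Finset.Icc_self, Finset.sum_singleton]
          have hy1 : xstar 1 ∈ 𝒳 := hxstarX 1 le_rfl (by omega)
          have h1 : ‖x 1 - xstar 1‖ ≤ R := hXbdd _ hx1 _ hy1
          have h0 : 0 ≤ ‖x 1 - xstar 1‖ := norm_nonneg _
          have hsq : ‖x 1 - xstar 1‖ ^ 2 ≤ R ^ 2 := by nlinarith
          have ha0 := (hαpos 1 le_rfl).le
          nlinarith [mul_nonneg ha0 (sub_nonneg.mpr hsq)]
        | succ m hm ih =>
          intro hmT
          rw [Finset.sum_Icc_succ_top (by omega : 1 ≤ m + 1)]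
          have ihm := ih (by omega)
          have hα1 : α m ≤ α (m+1) := hαmono m (m+1) (by omega)
          have hxm : x (m+1) ∈ 𝒳 := hxX (m+1) (by omega) (by omega)
          have hym : xstar (m+1) ∈ 𝒳 := hxstarX (m+1) (by omega) (by omega)
          have hb : ‖x (m+1) - xstar (m+1)‖ ≤ R := hXbdd _ hxm _ hym
          have h0 : 0 ≤ ‖x (m+1) - xstar (m+1)‖ := norm_nonneg _
          have hp : 0 ≤ (α (m+1) - α m) * (R ^ 2 - ‖x (m+1) - xstar (m+1)‖ ^ 2) :=
            mul_nonneg (by linarith) (by nlinarith)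
          nlinarith [ihm, hp]
      have hfin := hclaim (T-1) (by omega) le_rfl
      have hle1 : α (T-1) ≤ (T:ℝ) ^ β := hαT (T-1) (by omega)
      have hα0 : 0 ≤ α (T-1) := (hαpos (T-1) (by omega)).le
      have h1 : 0 ≤ α (T-1) * ‖x (T-1+1) - xstar (T-1+1)‖ ^ 2 :=
        mul_nonneg hα0 (by positivity)
      have h2 : α (T-1) * R ^ 2 ≤ (T:ℝ) ^ β * R ^ 2 :=
        mul_le_mul_of_nonneg_right hle1 (by positivity)
      have h3 : (T:ℝ) ^ β * R ^ 2 ≤ (T:ℝ) ^ q * R ^ 2 :=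
        mul_le_mul_of_nonneg_right hTβq (by positivity)
      nlinarith [hfin, h1, h2, h3]
  -- C3 : path-length sum
  have hC3 : ∑ s ∈ Finset.Icc 1 (T-1), 2 * R * (α s * ‖xstar (s+1) - xstar s‖)
      ≤ 2 * R * Cx * (T:ℝ) ^ q := by
    have hTT : (T:ℝ) ^ β * (T:ℝ) ^ Vx = (T:ℝ) ^ q := by
      rw [← Real.rpow_add hTpos]
      congr 1
      rw [hβdef, hqdef]; ring
    calc ∑ s ∈ Finset.Icc 1 (T-1), 2 * R * (α s * ‖xstar (s+1) - xstar s‖)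
        ≤ ∑ s ∈ Finset.Icc 1 (T-1), 2 * R * (T:ℝ) ^ β * ‖xstar (s+1) - xstar s‖ := by
          refine Finset.sum_le_sum fun s hs => ?_
          rw [Finset.mem_Icc] at hs
          have hle := hαT s (by omega)
          have h0 : 0 ≤ ‖xstar (s+1) - xstar s‖ := norm_nonneg _
          have h1 : α s * ‖xstar (s+1) - xstar s‖ ≤ (T:ℝ) ^ β * ‖xstar (s+1) - xstar s‖ :=
            mul_le_mul_of_nonneg_right hle h0
          nlinarith [h1, hR]
      _ = 2 * R * (T:ℝ) ^ β * ∑ s ∈ Finset.Icc 1 (T-1), ‖xstar (s+1) - xstar s‖ := by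
          rw [Finset.mul_sum]
      _ ≤ 2 * R * (T:ℝ) ^ β * (Cx * (T:ℝ) ^ Vx) := by
          refine mul_le_mul_of_nonneg_left hpath' (by positivity)
      _ = 2 * R * Cx * (T:ℝ) ^ q := by
          rw [← hTT]; ring
  -- C4 : last term
  have hC4 : f T (x T) - f T (xstar T) ≤ D * R := by
    have hxT : x T ∈ 𝒳 := hxmem T hT le_rfl
    have hyT : xstar T ∈ 𝒳 := hxstarX T hT le_rfl
    have h1 := hsub T (x T) hxT (xstar T) hyT
    have h2 : -⟪gradf T (x T), xstar T - x T⟫ ≤ D * R := by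
      calc -⟪gradf T (x T), xstar T - x T⟫ = ⟪gradf T (x T), x T - xstar T⟫ := by
            rw [← inner_neg_right]; congr 1; abel
        _ ≤ ‖gradf T (x T)‖ * ‖x T - xstar T‖ := real_inner_le_norm _ _
        _ ≤ D * R := mul_le_mul (hgradD T _ hxT) (hXbdd _ hxT _ hyT) (norm_nonneg _) hD0
    linarith
  have hDR : D * R ≤ D * R * (T:ℝ) ^ q := by
    nlinarith [mul_nonneg hD0 hR.le, hTq1]
  have hgoal : (2 * R * Cx + D ^ 2 / (2 * (1 + Vx)) + R ^ 2 + D * R) * (T:ℝ) ^ q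
      = 2 * R * Cx * (T:ℝ) ^ q + D ^ 2 / (2 * (1 + Vx)) * (T:ℝ) ^ q
        + (T:ℝ) ^ q * R ^ 2 + D * R * (T:ℝ) ^ q := by ring
  rw [hsplit, hgoal]
  rw [hsum3] at hbound1
  linarith [hbound1, hC1, hC2, hC3, hC4, hDR]
end

section
/- Consider horizon T ≥ 2 and the COLDQ setup: 𝒳 ⊆ ℝ^p convex with ‖x − y‖ ≤ R for all x, y ∈ 𝒳 (R > 0); convex losses f_t with subgradient maps ∇f_t satisfying ‖∇f_t(x)‖ ≤ D and f_t(y) ≥ f_t(x) + ⟨∇f_t(x), y − x⟩ on 𝒳; convex constraints g_t^n (1 ≤ n ≤ N) with |g_t^n(x)| ≤ G on 𝒳; step sizes α_t = t^{(1−V_x)/2} for some fixed V_x ∈ [0,1]; parameters η = 1/T and γ = ε·T with ε ∈ (0, G); x_1 ∈ 𝒳 arbitrary, Q_1^n = γ, and for t ∈ {2,…,T}: x_t minimizes Φ_t(x) = ⟨∇f_{t−1}(x_{t−1}), x − x_{t−1}⟩ + α_{t−1}·‖x − x_{t−1}‖² + Σ_{n=1}^N Q_{t−1}^n·[g_{t−1}^n(x)]_+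 over 𝒳 and Q_t^n = max{(1−η)·Q_{t−1}^n + [g_t^n(x_t)]_+ , γ}. Suppose benchmarks x_t* ∈ 𝒳 with g_t^n(x_t*) ≤ 0 satisfy Σ_{t=2}^T ‖x_t* − x_{t−1}*‖ ≤ C_x·T^{V_x}, and that for all x ∈ 𝒳 and t ≥ 2, (Σ_{n=1}^N (g_t^n(x) − g_{t−1}^n(x))²)^{1/2} ≤ B_t with Σ_{t=2}^T B_t ≤ C_g·T^{V_g} for some fixed V_g ∈ [0,1] and constants C_x, C_g ≥ 0. Then the hard constraint violation satisfies Σ_{n=1}^N Σ_{t=1}^T [g_t^n(x_t)]_+ ≤ ((G·√N·C_g + 2·R·C_x + D²/(2·(1+V_x)) + D·R + 2·N·G² + R²)/ε + N·G)·T^{V_g}. -/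
open scoped RealInnerProductSpace

lemma aux_strong_min {E : Type*} [NormedAddCommGroup E] [InnerProductSpace ℝ E]
    {𝒳 : Set E} (hconv : Convex ℝ 𝒳) (v z : E) {c : ℝ} (hc : 0 ≤ c)
    {h : E → ℝ} (hh : ConvexOn ℝ 𝒳 h) {a : E} (ha : a ∈ 𝒳)
    (hmin : ∀ y ∈ 𝒳, ⟪v, a - z⟫ + c * ‖a - z‖ ^ 2 + h a ≤
      ⟪v, y - z⟫ + c * ‖y - z‖ ^ 2 + h y)
    {y : E} (hy : y ∈ 𝒳) :
    ⟪v, a - z⟫ + c * ‖a - z‖ ^ 2 + h a + c * ‖y - a‖ ^ 2 ≤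
      ⟪v, y - z⟫ + c * ‖y - z‖ ^ 2 + h y := by
  have key : ∀ l : ℝ, 0 < l → l ≤ 1 →
      ⟪v, a - z⟫ + c * ‖a - z‖ ^ 2 + h a + c * (1 - l) * ‖y - a‖ ^ 2 ≤
        ⟪v, y - z⟫ + c * ‖y - z‖ ^ 2 + h y := by
    intro l hl0 hl1
    set w := (1 - l) • a + l • y with hw
    have hwX : w ∈ 𝒳 := hconv ha hy (by linarith) hl0.le (by ring)
    have hmw := hmin w hwX
    have hwz : w - z = (1 - l) • (a - z) + l • (y - z) := by
      rw [hw]; module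
    have hinner : ⟪v, w - z⟫ = (1 - l) * ⟪v, a - z⟫ + l * ⟪v, y - z⟫ := by
      rw [hwz, inner_add_right, real_inner_smul_right, real_inner_smul_right]
    have hnorm : ‖w - z‖ ^ 2 =
        (1 - l) * ‖a - z‖ ^ 2 + l * ‖y - z‖ ^ 2 - l * (1 - l) * ‖a - y‖ ^ 2 := by
      have hay : a - y = (a - z) - (y - z) := by abel
      rw [hwz, hay, ← real_inner_self_eq_norm_sq, ← real_inner_self_eq_norm_sq,
        ← real_inner_self_eq_norm_sq, ← real_inner_self_eq_norm_sq]
      simp only [inner_add_left, inner_add_right, inner_sub_left, inner_sub_right,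
        real_inner_smul_left, real_inner_smul_right]
      simp only [real_inner_comm z a, real_inner_comm z y, real_inner_comm y a]
      ring
    have hconvh : h w ≤ (1 - l) * h a + l * h y := by
      have := hh.2 ha hy (by linarith : (0:ℝ) ≤ 1 - l) hl0.le (by ring)
      simpa [hw, smul_eq_mul] using this
    have hyan : ‖a - y‖ = ‖y - a‖ := norm_sub_rev _ _
    rw [hinner, hnorm, hyan] at hmw
    have h1 : l * (⟪v, a - z⟫ + c * ‖a - z‖ ^ 2 + h a + c * (1 - l) * ‖y - a‖ ^ 2) ≤
        l * (⟪v, y - z⟫ + c * ‖y - z‖ ^ 2 + h y) := by nlinarith [hmw, hconvh]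
    exact le_of_mul_le_mul_left h1 hl0
  by_contra hcon
  push_neg at hcon
  set δ : ℝ := (⟪v, a - z⟫ + c * ‖a - z‖ ^ 2 + h a + c * ‖y - a‖ ^ 2)
    - (⟪v, y - z⟫ + c * ‖y - z‖ ^ 2 + h y) with hδdef
  have hδ : 0 < δ := by simp only [hδdef]; linarith
  have hM0 : 0 ≤ c * ‖y - a‖ ^ 2 := by positivity
  set l : ℝ := min 1 (δ / (c * ‖y - a‖ ^ 2 + 1)) with hl
  have hl0 : 0 < l := lt_min one_pos (div_pos hδ (by linarith))
  have hl1 : l ≤ 1 := min_le_left _ _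
  have hk := key l hl0 hl1
  have h2 : l * (c * ‖y - a‖ ^ 2) ≤ δ / (c * ‖y - a‖ ^ 2 + 1) * (c * ‖y - a‖ ^ 2) :=
    mul_le_mul_of_nonneg_right (min_le_right _ _) hM0
  have h3 : δ / (c * ‖y - a‖ ^ 2 + 1) * (c * ‖y - a‖ ^ 2) < δ := by
    rw [div_mul_eq_mul_div, div_lt_iff₀ (by linarith)]
    nlinarith
  have : c * (1 - l) * ‖y - a‖ ^ 2 > c * ‖y - a‖ ^ 2 - δ := by nlinarith
  simp only [hδdef] at this
  linarith

lemma aux_sum_rpow {β : ℝ} (hβ0 : 0 ≤ β) (hβ1 : β < 1) :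
    ∀ M : ℕ, ∑ s ∈ Finset.Icc 1 M, (s : ℝ) ^ (-β) ≤ (M : ℝ) ^ (1 - β) / (1 - β) := by
  intro M
  induction M with
  | zero =>
    simp [Real.zero_rpow (by linarith : (1:ℝ) - β ≠ 0)]
  | succ M ih =>
    rw [Finset.sum_Icc_succ_top (by omega : 1 ≤ M + 1)]
    have hm1 : (0:ℝ) < (M:ℝ) + 1 := by positivity
    have h1β : (0:ℝ) < 1 - β := by linarith
    have hber := rpow_one_add_le_one_add_mul_self
      (s := -(1 / ((M:ℝ) + 1))) (p := 1 - β)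
      (by rw [neg_le, neg_neg]; rw [div_le_one hm1]; linarith)
      (by linarith) (by linarith)
    have e1 : (1 + -(1 / ((M:ℝ) + 1))) = (M:ℝ) / ((M:ℝ) + 1) := by field_simp; ring
    rw [e1] at hber
    have e2 : ((M:ℝ) / ((M:ℝ) + 1)) ^ (1 - β) = (M:ℝ) ^ (1 - β) / ((M:ℝ) + 1) ^ (1 - β) :=
      Real.div_rpow (Nat.cast_nonneg M) hm1.le _
    rw [e2] at hber
    have hp : (0:ℝ) < ((M:ℝ) + 1) ^ (1 - β) := Real.rpow_pos_of_pos hm1 _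
    have hsplit : ((M:ℝ) + 1) ^ (1 - β) = ((M:ℝ) + 1) ^ (-β) * ((M:ℝ) + 1) := by
      rw [show (1:ℝ) - β = -β + 1 by ring, Real.rpow_add hm1, Real.rpow_one]
    -- key : (1 - β) * (M+1)^(-β) ≤ (M+1)^(1-β) - M^(1-β)
    have key : (1 - β) * ((M:ℝ) + 1) ^ (-β) ≤ ((M:ℝ) + 1) ^ (1 - β) - (M:ℝ) ^ (1 - β) := by
      have h4 : (M:ℝ) ^ (1 - β) / ((M:ℝ) + 1) ^ (1 - β) * ((M:ℝ) + 1) ^ (1 - β)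
          ≤ (1 + (1 - β) * -(1 / ((M:ℝ) + 1))) * ((M:ℝ) + 1) ^ (1 - β) :=
        mul_le_mul_of_nonneg_right hber hp.le
      rw [div_mul_cancel₀ _ hp.ne'] at h4
      have h5 : (1 + (1 - β) * -(1 / ((M:ℝ) + 1))) * ((M:ℝ) + 1) ^ (1 - β)
          = ((M:ℝ) + 1) ^ (1 - β) - (1 - β) * (((M:ℝ) + 1) ^ (1 - β) / ((M:ℝ) + 1)) := by
        field_simp
        ring
      rw [h5] at h4
      have h6 : ((M:ℝ) + 1) ^ (1 - β) / ((M:ℝ) + 1) = ((M:ℝ) + 1) ^ (-β) := by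
        rw [hsplit, mul_div_assoc, div_self hm1.ne', mul_one]
      rw [h6] at h4
      linarith
    have hcast : ((M + 1 : ℕ) : ℝ) = (M:ℝ) + 1 := by push_cast; ring
    rw [hcast]
    rw [le_div_iff₀ h1β]
    have ih' : (∑ s ∈ Finset.Icc 1 M, (s : ℝ) ^ (-β)) * (1 - β) ≤ (M:ℝ) ^ (1 - β) := by
      rw [← le_div_iff₀ h1β]; exact ih
    nlinarith [key]

set_option maxHeartbeats 2000000 in
/-- Corollary 1 (violation part): COLDQ with `α_t = t^((1−V_x)/2)`, `η = 1/T`,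
`γ = ε·T` achieves `O(T^{V_g})` hard constraint violation, with explicit constant. -/
theorem coldq_hard_violation_explicit
    (p N T : ℕ) (hT : 2 ≤ T) (R D G η γ ε Vx Vg Cx Cg : ℝ)
    (hR : 0 < R) (hVx0 : 0 ≤ Vx) (hVx1 : Vx ≤ 1)
    (hVg0 : 0 ≤ Vg) (hVg1 : Vg ≤ 1) (hCx : 0 ≤ Cx) (hCg : 0 ≤ Cg)
    (hε0 : 0 < ε) (hεG : ε < G)
    (hη : η = 1 / (T : ℝ)) (hγ : γ = ε * (T : ℝ))
    (𝒳 : Set (EuclideanSpace ℝ (Fin p)))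
    (hXconv : Convex ℝ 𝒳)
    (hXbdd : ∀ x ∈ 𝒳, ∀ y ∈ 𝒳, ‖x - y‖ ≤ R)
    (f : ℕ → EuclideanSpace ℝ (Fin p) → ℝ)
    (hfconv : ∀ t, ConvexOn ℝ 𝒳 (f t))
    (gradf : ℕ → EuclideanSpace ℝ (Fin p) → EuclideanSpace ℝ (Fin p))
    (hgradD : ∀ t, ∀ x ∈ 𝒳, ‖gradf t x‖ ≤ D)
    (hsub : ∀ t, ∀ x ∈ 𝒳, ∀ y ∈ 𝒳, f t x + ⟪gradf t x, y - x⟫ ≤ f t y)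
    (g : ℕ → Fin N → EuclideanSpace ℝ (Fin p) → ℝ)
    (hgconv : ∀ t n, ConvexOn ℝ 𝒳 (g t n))
    (hgG : ∀ t n, ∀ x ∈ 𝒳, |g t n x| ≤ G)
    (α : ℕ → ℝ) (hα : ∀ t, α t = (t : ℝ) ^ ((1 - Vx) / 2))
    (x : ℕ → EuclideanSpace ℝ (Fin p)) (hx1 : x 1 ∈ 𝒳)
    (Q : ℕ → Fin N → ℝ) (hQ1 : ∀ n, Q 1 n = γ)
    (hxX : ∀ t, 2 ≤ t → t ≤ T → x t ∈ 𝒳)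
    (hxmin : ∀ t, 2 ≤ t → t ≤ T → ∀ y ∈ 𝒳,
      ⟪gradf (t - 1) (x (t - 1)), x t - x (t - 1)⟫
          + α (t - 1) * ‖x t - x (t - 1)‖ ^ 2
          + ∑ n, Q (t - 1) n * max (g (t - 1) n (x t)) 0 ≤
        ⟪gradf (t - 1) (x (t - 1)), y - x (t - 1)⟫
          + α (t - 1) * ‖y - x (t - 1)‖ ^ 2
          + ∑ n, Q (t - 1) n * max (g (t - 1) n y) 0)
    (hQupd : ∀ t, 2 ≤ t → t ≤ T → ∀ n,
      Q t n = max ((1 - η) * Q (t - 1) n + max (g t n (x t)) 0) γ)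
    (xstar : ℕ → EuclideanSpace ℝ (Fin p))
    (hxstarX : ∀ t, 1 ≤ t → t ≤ T → xstar t ∈ 𝒳)
    (hxstarfeas : ∀ t, 1 ≤ t → t ≤ T → ∀ n, g t n (xstar t) ≤ 0)
    (hpath : ∑ t ∈ Finset.Icc 2 T, ‖xstar t - xstar (t - 1)‖ ≤ Cx * (T : ℝ) ^ Vx)
    (B : ℕ → ℝ) (hB0 : ∀ t, 2 ≤ t → t ≤ T → 0 ≤ B t)
    (hB : ∀ t, 2 ≤ t → t ≤ T → ∀ x ∈ 𝒳,
      Real.sqrt (∑ n, (g t n x - g (t - 1) n x) ^ 2) ≤ B t)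
    (hBsum : ∑ t ∈ Finset.Icc 2 T, B t ≤ Cg * (T : ℝ) ^ Vg) :
    ∑ n : Fin N, ∑ t ∈ Finset.Icc 1 T, max (g t n (x t)) 0 ≤
      ((G * Real.sqrt N * Cg + 2 * R * Cx + D ^ 2 / (2 * (1 + Vx))
          + D * R + 2 * N * G ^ 2 + R ^ 2) / ε + N * G)
        * (T : ℝ) ^ Vg := by
  classical
  have hT2 : (2:ℝ) ≤ (T:ℝ) := by exact_mod_cast hT
  have hT0 : (0:ℝ) < T := by linarith
  have hT1 : (1:ℝ) ≤ T := by linarith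
  have hG0 : (0:ℝ) < G := hε0.trans hεG
  have hD0 : (0:ℝ) ≤ D := (norm_nonneg _).trans (hgradD 1 (x 1) hx1)
  have hKg : (1:ℝ) ≤ (T : ℝ) ^ Vg := Real.one_le_rpow hT1 hVg0
  set β : ℝ := (1 - Vx) / 2 with hβdef
  have hβ0 : 0 ≤ β := by rw [hβdef]; linarith
  have hβ1 : β ≤ 1 := by rw [hβdef]; linarith
  have hβhalf : β ≤ 1/2 := by rw [hβdef]; linarith
  have hγpos : (0:ℝ) < γ := by rw [hγ]; positivity
  have hmemx : ∀ s, 1 ≤ s → s ≤ T → x s ∈ 𝒳 := by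
    intro s h1 h2
    rcases eq_or_lt_of_le h1 with h | h
    · exact h ▸ hx1
    · exact hxX s h h2
  have hα0 : ∀ s : ℕ, 0 ≤ α s := by
    intro s; rw [hα]; positivity
  have hαmono : ∀ s u : ℕ, s ≤ u → α s ≤ α u := by
    intro s u hsu; rw [hα, hα]
    exact Real.rpow_le_rpow (Nat.cast_nonneg s) (by exact_mod_cast hsu) hβ0
  have hαT : ∀ s : ℕ, s ≤ T → α s ≤ (T:ℝ) ^ β := by
    intro s hs; rw [hα]
    exact Real.rpow_le_rpow (Nat.cast_nonneg _) (by exact_mod_cast hs) hβ0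
  have hTβ : (T:ℝ) ^ β ≤ (T:ℝ) := by
    calc (T:ℝ) ^ β ≤ (T:ℝ) ^ (1:ℝ) := Real.rpow_le_rpow_of_exponent_le hT1 hβ1
    _ = T := Real.rpow_one _
  have hQγ : ∀ t, 1 ≤ t → t ≤ T → ∀ n, γ ≤ Q t n := by
    intro t h1 h2 n
    rcases eq_or_lt_of_le h1 with h | h
    · rw [← h, hQ1]
    · rw [hQupd t h h2 n]; exact le_max_right _ _
  have hQub : ∀ t, 1 ≤ t → t ≤ T → ∀ n, Q t n ≤ G * T := by
    intro t
    induction t with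
    | zero => intro h1; exact absurd h1 (by omega)
    | succ s ih =>
      intro h1 h2 n
      rcases Nat.lt_or_ge s 1 with h | h
      · have hs0 : s = 0 := by omega
        subst hs0
        rw [hQ1, hγ]
        nlinarith
      · have hsT : s ≤ T := by omega
        rw [hQupd (s+1) (by omega) h2 n]
        have hx' : x (s+1) ∈ 𝒳 := hxX (s+1) (by omega) h2
        have hg' : max (g (s+1) n (x (s+1))) 0 ≤ G :=
          max_le ((abs_le.mp (hgG (s+1) n _ hx')).2) hG0.le
        have hQ' := ih h hsT n
        have hη1 : (0:ℝ) ≤ 1 - η := by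
          rw [hη]
          have : 1/(T:ℝ) ≤ 1 := by rw [div_le_one hT0]; linarith
          linarith
        apply max_le
        · have h5 : (1-η) * Q s n ≤ (1-η) * (G*T) := mul_le_mul_of_nonneg_left hQ' hη1
          have he : (1-η)*(G*(T:ℝ)) + G = G*T := by
            rw [hη]; field_simp; ring
          simp only [Nat.add_sub_cancel]
          linarith
        · rw [hγ]; nlinarith
  -- the per-step key inequality
  have key : ∀ t ∈ Finset.Icc 2 T,
      γ * ∑ n, max (g t n (x t)) 0 ≤
        D * R + D ^ 2 / (4 * α (t-1))
        + α (t-1) * (‖xstar (t-1) - x (t-1)‖ ^ 2 - ‖xstar (t-1) - x t‖ ^ 2)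
        + Real.sqrt N * (G * T) * B t := by
    intro t ht
    obtain ⟨ht2, htT⟩ := Finset.mem_Icc.mp ht
    have ht1 : 1 ≤ t - 1 := by omega
    have htT' : t - 1 ≤ T := by omega
    have hxt : x t ∈ 𝒳 := hxX t ht2 htT
    have hxs : x (t-1) ∈ 𝒳 := hmemx (t-1) ht1 htT'
    have hst : xstar (t-1) ∈ 𝒳 := hxstarX (t-1) ht1 htT'
    have hαpos : 0 < α (t-1) := by
      rw [hα]
      apply Real.rpow_pos_of_pos
      exact_mod_cast ht1
    have hQ0 : ∀ n, (0:ℝ) ≤ Q (t-1) n := fun n => hγpos.le.trans (hQγ (t-1) ht1 htT' n)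
    have hhconv : ConvexOn ℝ 𝒳 (fun u => ∑ n, Q (t-1) n * max (g (t-1) n u) 0) := by
      have hterm : ∀ n : Fin N, ConvexOn ℝ 𝒳 (fun u => Q (t-1) n * max (g (t-1) n u) 0) := by
        intro n
        have h1 : ConvexOn ℝ 𝒳 (fun u => max (g (t-1) n u) 0) := by
          have := (hgconv (t-1) n).sup (convexOn_const (0:ℝ) hXconv)
          exact ⟨hXconv, fun a ha b hb μ ν hμ hν hμν => this.2 ha hb hμ hν hμν⟩
        simpa [smul_eq_mul] using h1.smul (hQ0 n)
      classical
      induction (Finset.univ : Finset (Fin N)) using Finset.induction with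
      | empty => simpa using convexOn_const (0:ℝ) hXconv
      | insert _ _ hnot ih =>
        simp only [Finset.sum_insert hnot]
        exact (hterm _).add ih
    have hmin' := aux_strong_min hXconv (gradf (t-1) (x (t-1))) (x (t-1)) (hα0 (t-1))
      hhconv hxt (hxmin t ht2 htT) hst
    have hfeas : ∑ n, Q (t-1) n * max (g (t-1) n (xstar (t-1))) 0 = 0 := by
      apply Finset.sum_eq_zero; intro n _
      rw [max_eq_right (hxstarfeas (t-1) ht1 htT' n), mul_zero]
    have hvn : ‖gradf (t-1) (x (t-1))‖ ≤ D := hgradD (t-1) _ hxs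
    have hi1 : ⟪gradf (t-1) (x (t-1)), xstar (t-1) - x (t-1)⟫ ≤ D * R :=
      le_trans (real_inner_le_norm _ _)
        (mul_le_mul hvn (hXbdd _ hst _ hxs) (norm_nonneg _) hD0)
    have habs : -⟪gradf (t-1) (x (t-1)), x t - x (t-1)⟫ ≤ D * ‖x t - x (t-1)‖ := by
      have h6 := abs_real_inner_le_norm (gradf (t-1) (x (t-1))) (x t - x (t-1))
      have h7 := mul_le_mul_of_nonneg_right hvn (norm_nonneg (x t - x (t-1)))
      have h8 := neg_abs_le ⟪gradf (t-1) (x (t-1)), x t - x (t-1)⟫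
      linarith
    have hquad : D * ‖x t - x (t-1)‖ - α (t-1) * ‖x t - x (t-1)‖^2 ≤ D^2/(4 * α (t-1)) := by
      rw [le_div_iff₀ (by positivity)]
      nlinarith [sq_nonneg (D - 2 * α (t-1) * ‖x t - x (t-1)‖), hαpos,
        norm_nonneg (x t - x (t-1))]
    have hstep : ∑ n, Q (t-1) n * max (g (t-1) n (x t)) 0 ≤
        D*R + D^2/(4*α (t-1))
        + α (t-1) * (‖xstar (t-1) - x (t-1)‖^2 - ‖xstar (t-1) - x t‖^2) := by
      rw [hfeas] at hmin'
      nlinarith [hmin', hi1, habs, hquad]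
    have hc1 : γ * ∑ n, max (g t n (x t)) 0 ≤ ∑ n, Q (t-1) n * max (g t n (x t)) 0 := by
      rw [Finset.mul_sum]
      apply Finset.sum_le_sum; intro n _
      exact mul_le_mul_of_nonneg_right (hQγ (t-1) ht1 htT' n) (le_max_right _ _)
    have hc2 : ∑ n, Q (t-1) n * max (g t n (x t)) 0 ≤
        ∑ n, Q (t-1) n * max (g (t-1) n (x t)) 0 + Real.sqrt N * (G*T) * B t := by
      have h1 : ∑ n, Q (t-1) n * max (g t n (x t)) 0
          - ∑ n, Q (t-1) n * max (g (t-1) n (x t)) 0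
          = ∑ n, Q (t-1) n * (max (g t n (x t)) 0 - max (g (t-1) n (x t)) 0) := by
        rw [← Finset.sum_sub_distrib]
        apply Finset.sum_congr rfl; intro n _; ring
      have h2 : ∑ n, Q (t-1) n * (max (g t n (x t)) 0 - max (g (t-1) n (x t)) 0)
          ≤ ∑ n, Q (t-1) n * |g t n (x t) - g (t-1) n (x t)| := by
        apply Finset.sum_le_sum; intro n _
        exact mul_le_mul_of_nonneg_left
          (le_trans (le_abs_self _) (abs_max_sub_max_le_abs _ _ 0)) (hQ0 n)
      have h3 := Real.sum_mul_le_sqrt_mul_sqrt Finset.univ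
        (fun n => Q (t-1) n) (fun n => |g t n (x t) - g (t-1) n (x t)|)
      have h4 : Real.sqrt (∑ n, Q (t-1) n ^ 2) ≤ Real.sqrt N * (G*T) := by
        have hsum : ∑ n, Q (t-1) n ^ 2 ≤ (N:ℝ) * (G*T)^2 := by
          calc ∑ n, Q (t-1) n ^2 ≤ ∑ _n : Fin N, (G*(T:ℝ))^2 :=
                Finset.sum_le_sum fun n _ => by
                  have hu := hQub (t-1) ht1 htT' n
                  have hl := hQ0 n
                  nlinarith
            _ = (N:ℝ) * (G*T)^2 := by
                rw [Finset.sum_const, Finset.card_univ, Fintype.card_fin, nsmul_eq_mul]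
        calc Real.sqrt (∑ n, Q (t-1) n ^ 2) ≤ Real.sqrt ((N:ℝ) * (G*T)^2) :=
              Real.sqrt_le_sqrt hsum
          _ = Real.sqrt N * (G*T) := by
              rw [Real.sqrt_mul (Nat.cast_nonneg N), Real.sqrt_sq (by positivity)]
      have h5 : Real.sqrt (∑ n, |g t n (x t) - g (t-1) n (x t)|^2) ≤ B t := by
        simpa [sq_abs] using hB t ht2 htT (x t) hxt
      have h6 : Real.sqrt (∑ n, Q (t-1) n ^ 2)
            * Real.sqrt (∑ n, |g t n (x t) - g (t-1) n (x t)|^2)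
          ≤ (Real.sqrt N * (G*T)) * B t :=
        mul_le_mul h4 h5 (Real.sqrt_nonneg _) (by positivity)
      linarith
    linarith
  -- sum up
  set a : ℕ → ℝ := fun s => ‖xstar s - x s‖^2 with hadef
  have ha0 : ∀ s, 0 ≤ a s := fun s => by simp only [hadef]; positivity
  have haR : ∀ s, 1 ≤ s → s ≤ T → a s ≤ R^2 := by
    intro s h1 h2
    have := hXbdd (xstar s) (hxstarX s h1 h2) (x s) (hmemx s h1 h2)
    simp only [hadef]
    nlinarith [norm_nonneg (xstar s - x s)]
  have habel : ∀ M, 2 ≤ M → M ≤ T →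
      ∑ t ∈ Finset.Icc 2 M, α (t-1) * (a (t-1) - a t) ≤ α (M-1) * (R^2 - a M) := by
    intro M hM
    induction M, hM using Nat.le_induction with
    | base =>
      intro h2T
      rw [Finset.Icc_self, Finset.sum_singleton]
      have h1 : a 1 ≤ R^2 := haR 1 (by omega) (by omega)
      have := hα0 (2-1)
      nlinarith
    | succ M hM ih =>
      intro hMT
      rw [Finset.sum_Icc_succ_top (by omega : 2 ≤ M + 1)]
      have h1 := ih (by omega)
      have hM1 : M + 1 - 1 = M := by omega
      rw [hM1]
      have hmono := hαmono (M-1) M (by omega)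
      have haM : a M ≤ R^2 := haR M (by omega) (by omega)
      have h2 : α (M-1) * (R^2 - a M) ≤ α M * (R^2 - a M) :=
        mul_le_mul_of_nonneg_right hmono (by linarith)
      nlinarith
    -- reindexed sum bound for the D^2/(4 alpha) terms
  have hrein : ∑ t ∈ Finset.Icc 2 T, ((t-1 : ℕ) : ℝ) ^ (-β)
      = ∑ s ∈ Finset.Icc 1 (T-1), ((s : ℕ) : ℝ) ^ (-β) := by
    apply Finset.sum_nbij' (i := fun t => t - 1) (j := fun s => s + 1)
    · intro t ht; simp only [Finset.mem_Icc] at *; omega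
    · intro s hs; simp only [Finset.mem_Icc] at *; omega
    · intro t ht; simp only [Finset.mem_Icc] at ht; omega
    · intro s hs; simp only [Finset.mem_Icc] at hs; omega
    · intro t ht; rfl
  have h1mβ : (0:ℝ) < 1 - β := by rw [hβdef]; linarith
  have h1Vx : (0:ℝ) < 1 + Vx := by linarith
  have hsum2 : ∑ t ∈ Finset.Icc 2 T, D^2/(4 * α (t-1)) ≤ D ^ 2 / (2 * (1 + Vx)) * T := by
    have heq : ∀ t ∈ Finset.Icc 2 T, D^2/(4*α (t-1)) = (D^2/4) * ((t-1:ℕ):ℝ)^(-β) := by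
      intro t ht
      obtain ⟨ht2, htT⟩ := Finset.mem_Icc.mp ht
      have hpos : (0:ℝ) < ((t-1:ℕ):ℝ) := by exact_mod_cast (by omega : 0 < t - 1)
      rw [hα, Real.rpow_neg hpos.le]
      have hne : ((t-1:ℕ):ℝ)^β ≠ 0 := ne_of_gt (Real.rpow_pos_of_pos hpos β)
      field_simp
    rw [Finset.sum_congr rfl heq, ← Finset.mul_sum, hrein]
    have h1 := aux_sum_rpow hβ0 (by linarith : β < 1) (T-1)
    have h2 : ((T-1:ℕ):ℝ)^(1-β) ≤ (T:ℝ)^(1-β) :=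
      Real.rpow_le_rpow (Nat.cast_nonneg _) (by exact_mod_cast Nat.sub_le T 1) h1mβ.le
    have h3 : (T:ℝ)^(1-β) ≤ (T:ℝ) := by
      calc (T:ℝ)^(1-β) ≤ (T:ℝ)^(1:ℝ) :=
            Real.rpow_le_rpow_of_exponent_le hT1 (by linarith [hβ0])
        _ = T := Real.rpow_one _
    have hfin : ∑ s ∈ Finset.Icc 1 (T-1), ((s:ℕ):ℝ)^(-β) ≤ (T:ℝ)/(1-β) := by
      apply h1.trans
      apply (div_le_div_iff_of_pos_right h1mβ).mpr
      linarith
    calc (D^2/4) * (∑ s ∈ Finset.Icc 1 (T-1), ((s:ℕ):ℝ)^(-β))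
        ≤ (D^2/4) * ((T:ℝ)/(1-β)) := mul_le_mul_of_nonneg_left hfin (by positivity)
      _ = D ^ 2 / (2 * (1 + Vx)) * T := by
          have hVxne : (1:ℝ)+Vx ≠ 0 := by linarith
          have h4ne : (4:ℝ)+Vx*4 ≠ 0 := by linarith
          rw [hβdef]
          field_simp
          have hinv : ((4:ℝ)+Vx*4) * ((4:ℝ)+Vx*4)⁻¹ = 1 := mul_inv_cancel₀ h4ne
          linear_combination (D^2*4) * (mul_inv_cancel₀ hVxne)
  have hsum3 : ∑ t ∈ Finset.Icc 2 T,
      α (t-1) * (‖xstar (t-1) - x (t-1)‖^2 - ‖xstar (t-1) - x t‖^2)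
      ≤ R^2 * T + 2*R*Cx*T := by
    have hper : ∀ t ∈ Finset.Icc 2 T,
        α (t-1) * (‖xstar (t-1) - x (t-1)‖^2 - ‖xstar (t-1) - x t‖^2)
        ≤ α (t-1) * (a (t-1) - a t) + 2*R*(T:ℝ)^β * ‖xstar t - xstar (t-1)‖ := by
      intro t ht
      obtain ⟨ht2, htT⟩ := Finset.mem_Icc.mp ht
      have ht1 : 1 ≤ t - 1 := by omega
      have htT' : t - 1 ≤ T := by omega
      have hxt : x t ∈ 𝒳 := hxX t ht2 htT
      have hstm : xstar (t-1) ∈ 𝒳 := hxstarX (t-1) ht1 htT'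
      have hstt : xstar t ∈ 𝒳 := hxstarX t (by omega) htT
      have hn1 : ‖xstar t - x t‖ ≤ R := hXbdd _ hstt _ hxt
      have hn2 : ‖xstar (t-1) - x t‖ ≤ R := hXbdd _ hstm _ hxt
      have htri : ‖xstar t - x t‖ - ‖xstar (t-1) - x t‖ ≤ ‖xstar t - xstar (t-1)‖ := by
        have h9 := norm_sub_norm_le (xstar t - x t) (xstar (t-1) - x t)
        have he : (xstar t - x t) - (xstar (t-1) - x t) = xstar t - xstar (t-1) := by abel
        rw [he] at h9; exact h9
      have hat : a t = ‖xstar t - x t‖^2 := rfl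
      have hat1 : a (t-1) = ‖xstar (t-1) - x (t-1)‖^2 := rfl
      have hn : a t - ‖xstar (t-1) - x t‖^2 ≤ 2*R*‖xstar t - xstar (t-1)‖ := by
        rw [hat]
        nlinarith [norm_nonneg (xstar t - x t), norm_nonneg (xstar (t-1) - x t),
          norm_nonneg (xstar t - xstar (t-1))]
      have e1 : α (t-1) * (a t - ‖xstar (t-1) - x t‖^2)
          ≤ α (t-1) * (2*R*‖xstar t - xstar (t-1)‖) :=
        mul_le_mul_of_nonneg_left hn (hα0 _)
      have e2 : α (t-1) * (2*R*‖xstar t - xstar (t-1)‖)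
          ≤ (T:ℝ)^β * (2*R*‖xstar t - xstar (t-1)‖) :=
        mul_le_mul_of_nonneg_right (hαT _ htT') (by positivity)
      rw [← hat1]
      nlinarith [e1, e2]
    have h1 := habel T hT le_rfl
    have h2 : α (T-1) * (R^2 - a T) ≤ R^2 * T := by
      have hαle : α (T-1) ≤ (T:ℝ) := le_trans (hαT (T-1) (by omega)) hTβ
      nlinarith [hα0 (T-1), ha0 T, sq_nonneg R]
    have h5 : ∑ t ∈ Finset.Icc 2 T, 2*R*(T:ℝ)^β * ‖xstar t - xstar (t-1)‖ ≤ 2*R*Cx*T := by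
      rw [← Finset.mul_sum]
      have h6 : 2*R*(T:ℝ)^β * (∑ t ∈ Finset.Icc 2 T, ‖xstar t - xstar (t-1)‖)
          ≤ 2*R*(T:ℝ)^β * (Cx * (T:ℝ)^Vx) :=
        mul_le_mul_of_nonneg_left hpath (by positivity)
      apply h6.trans
      have h7 : (T:ℝ)^β * (T:ℝ)^Vx = (T:ℝ)^(β+Vx) := (Real.rpow_add hT0 _ _).symm
      have h8 : (T:ℝ)^(β+Vx) ≤ (T:ℝ) := by
        calc (T:ℝ)^(β+Vx) ≤ (T:ℝ)^(1:ℝ) :=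
              Real.rpow_le_rpow_of_exponent_le hT1 (by rw [hβdef]; linarith)
          _ = T := Real.rpow_one _
      calc 2*R*(T:ℝ)^β * (Cx * (T:ℝ)^Vx) = 2*R*Cx*((T:ℝ)^β * (T:ℝ)^Vx) := by ring
        _ = 2*R*Cx*((T:ℝ)^(β+Vx)) := by rw [h7]
        _ ≤ 2*R*Cx*T := mul_le_mul_of_nonneg_left h8 (by positivity)
    calc ∑ t ∈ Finset.Icc 2 T,
          α (t-1) * (‖xstar (t-1) - x (t-1)‖^2 - ‖xstar (t-1) - x t‖^2)
        ≤ ∑ t ∈ Finset.Icc 2 T,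
            (α (t-1) * (a (t-1) - a t) + 2*R*(T:ℝ)^β * ‖xstar t - xstar (t-1)‖) :=
          Finset.sum_le_sum hper
      _ = (∑ t ∈ Finset.Icc 2 T, α (t-1) * (a (t-1) - a t))
          + ∑ t ∈ Finset.Icc 2 T, 2*R*(T:ℝ)^β * ‖xstar t - xstar (t-1)‖ :=
          Finset.sum_add_distrib
      _ ≤ R^2 * T + 2*R*Cx*T := add_le_add (h1.trans h2) h5
  have hsum1 : ∑ _t ∈ Finset.Icc 2 T, D*R ≤ (T:ℝ) * (D*R) := by
    rw [Finset.sum_const, Nat.card_Icc, nsmul_eq_mul]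
    have hcard : ((T+1-2:ℕ):ℝ) ≤ (T:ℝ) := by exact_mod_cast (by omega : T+1-2 ≤ T)
    exact mul_le_mul_of_nonneg_right hcard (by positivity)
  have hsum4 : ∑ t ∈ Finset.Icc 2 T, Real.sqrt N * (G*T) * B t
      ≤ Real.sqrt N * (G*T) * (Cg * (T:ℝ)^Vg) := by
    rw [← Finset.mul_sum]
    exact mul_le_mul_of_nonneg_left hBsum (by positivity)
  have htot : γ * (∑ t ∈ Finset.Icc 2 T, ∑ n, max (g t n (x t)) 0)
      ≤ (D*R + D ^ 2 / (2 * (1 + Vx)) + R^2 + 2*R*Cx + G*Real.sqrt N*Cg*(T:ℝ)^Vg) * T := by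
    rw [Finset.mul_sum]
    have h0 := Finset.sum_le_sum key
    rw [Finset.sum_add_distrib, Finset.sum_add_distrib, Finset.sum_add_distrib] at h0
    have hrt : Real.sqrt N * (G*T) * (Cg * (T:ℝ)^Vg)
        = (G*Real.sqrt N*Cg*(T:ℝ)^Vg) * T := by ring
    rw [hrt] at hsum4
    linarith [h0, hsum1, hsum2, hsum3, hsum4]
  have hS : (∑ t ∈ Finset.Icc 2 T, ∑ n, max (g t n (x t)) 0)
      ≤ (D*R + D^2/(2*(1+Vx)) + R^2 + 2*R*Cx + G*Real.sqrt N*Cg*(T:ℝ)^Vg) / ε := by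
    rw [le_div_iff₀ hε0]
    rw [hγ] at htot
    exact (mul_le_mul_iff_of_pos_right hT0).mp (by nlinarith [htot])
  rw [Finset.sum_comm]
  have hsplit1 : Finset.Icc 1 T = insert 1 (Finset.Icc 2 T) := by
    ext u; simp only [Finset.mem_Icc, Finset.mem_insert]; omega
  rw [hsplit1, Finset.sum_insert (by simp only [Finset.mem_Icc]; omega)]
  have hfirst : ∑ n, max (g 1 n (x 1)) 0 ≤ (N:ℝ) * G := by
    calc ∑ n, max (g 1 n (x 1)) 0 ≤ ∑ _n : Fin N, G :=
        Finset.sum_le_sum fun n _ => max_le ((abs_le.mp (hgG 1 n _ hx1)).2) hG0.le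
      _ = (N:ℝ) * G := by
        rw [Finset.sum_const, Finset.card_univ, Fintype.card_fin, nsmul_eq_mul]
  have hC1 : (0:ℝ) ≤ D*R + D^2/(2*(1+Vx)) + R^2 + 2*R*Cx :=
    add_nonneg (add_nonneg (add_nonneg (mul_nonneg hD0 hR.le)
      (div_nonneg (sq_nonneg D) (by linarith))) (sq_nonneg R))
      (mul_nonneg (mul_nonneg (by norm_num) hR.le) hCx)
  have hsqN : (0:ℝ) ≤ G * Real.sqrt N * Cg := by positivity
  have hNG : (0:ℝ) ≤ (N:ℝ) * G := mul_nonneg (Nat.cast_nonneg N) hG0.le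
  have hmain : (N:ℝ)*G
      + (D*R + D^2/(2*(1+Vx)) + R^2 + 2*R*Cx + G*Real.sqrt N*Cg*(T:ℝ)^Vg)/ε
      ≤ ((G * Real.sqrt N * Cg + 2 * R * Cx + D ^ 2 / (2 * (1 + Vx))
          + D * R + 2 * N * G ^ 2 + R ^ 2) / ε + N * G) * (T:ℝ)^Vg := by
    have hdiv : (D*R + D^2/(2*(1+Vx)) + R^2 + 2*R*Cx + G*Real.sqrt N*Cg*(T:ℝ)^Vg)/ε
        ≤ ((G * Real.sqrt N * Cg + 2 * R * Cx + D ^ 2 / (2 * (1 + Vx))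
            + D * R + 2 * N * G ^ 2 + R ^ 2) * (T:ℝ)^Vg)/ε := by
      apply (div_le_div_iff_of_pos_right hε0).mpr
      nlinarith [mul_nonneg hC1 (sub_nonneg.mpr hKg),
        mul_nonneg (mul_nonneg (Nat.cast_nonneg N : (0:ℝ) ≤ (N:ℝ)) (sq_nonneg G))
          (by linarith : (0:ℝ) ≤ (T:ℝ)^Vg)]
    have hNGK : (N:ℝ)*G ≤ (N:ℝ)*G*(T:ℝ)^Vg := by nlinarith [hNG, hKg]
    have hrhs : ((G * Real.sqrt N * Cg + 2 * R * Cx + D ^ 2 / (2 * (1 + Vx))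
          + D * R + 2 * N * G ^ 2 + R ^ 2) / ε + N * G) * (T:ℝ)^Vg
        = ((G * Real.sqrt N * Cg + 2 * R * Cx + D ^ 2 / (2 * (1 + Vx))
          + D * R + 2 * N * G ^ 2 + R ^ 2) * (T:ℝ)^Vg)/ε + (N:ℝ)*G*(T:ℝ)^Vg := by
      ring
    rw [hrhs]
    linarith [hdiv, hNGK]
  exact le_trans (add_le_add hfirst hS) hmain
end
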